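/- Every finite rank linear map T : H → H (not assumed bounded) admits a finite rank linear map A : H → H with T ∘ A ∘ T = T; hence the semigroup of all finite rank linear operators on H (under composition) is a regular semigroup. -/
import Mathlib


/-- Every finite rank (not necessarily bounded) linear map `T : H → H` admits a
finite rank linear map `A` with `T ∘ A ∘ T = T`; hence the semigroup of all
finite rank linear operators on `H` is regular. -/
theorem finiteRank_linearMap_regular {𝕜 : Type*} [RCLike 𝕜]
    {H : Type*} [NormedAddCommGroup H] [InnerProductSpace 𝕜 H] [CompleteSpace H]
    (T : H →ₗ[𝕜] H) (hT : FiniteDimensional 𝕜 (LinearMap.range T)) :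
    ∃ A : H →ₗ[𝕜] H, FiniteDimensional 𝕜 (LinearMap.range A) ∧
      T ∘ₗ A ∘ₗ T = T := by
  obtain ⟨K, hK⟩ := Submodule.exists_isCompl (LinearMap.ker T)
  obtain ⟨W, hW⟩ := Submodule.exists_isCompl (LinearMap.range T)
  let e : LinearMap.range T ≃ₗ[𝕜] K :=
    T.quotKerEquivRange.symm.trans (Submodule.quotientEquivOfIsCompl _ _ hK)
  have hTe : ∀ v : LinearMap.range T, T (e v) = v := by
    intro v
    have h1 : T.quotKerEquivRange (Submodule.Quotient.mk ((e v : K) : H)) = v := by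
      have he : (e v : K) = (Submodule.quotientEquivOfIsCompl _ _ hK)
          (T.quotKerEquivRange.symm v) := rfl
      rw [he, Submodule.mk_quotientEquivOfIsCompl_apply]
      simp
    have h2 : T.quotKerEquivRange (Submodule.Quotient.mk ((e v : K) : H))
        = ⟨T (e v), LinearMap.mem_range_self T _⟩ := rfl
    have := h2 ▸ h1
    exact congrArg Subtype.val this
  let p : H →ₗ[𝕜] LinearMap.range T := Submodule.linearProjOfIsCompl _ _ hW
  let A : H →ₗ[𝕜] H := K.subtype ∘ₗ (e : LinearMap.range T →ₗ[𝕜] K) ∘ₗ p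
  refine ⟨A, ?_, ?_⟩
  · have hle : LinearMap.range A ≤ K := by
      rintro x ⟨y, rfl⟩
      exact ((e : LinearMap.range T →ₗ[𝕜] K) (p y)).2
    have : FiniteDimensional 𝕜 K := FiniteDimensional.of_injective
      (e.symm.toLinearMap) e.symm.injective
    exact FiniteDimensional.of_injective (Submodule.inclusion hle)
      (Submodule.inclusion_injective hle)
  · ext x
    have hp : p (T x) = ⟨T x, LinearMap.mem_range_self T x⟩ :=
      Submodule.linearProjOfIsCompl_apply_left hW ⟨T x, LinearMap.mem_range_self T x⟩
    simp only [LinearMap.comp_apply, A, Submodule.subtype_apply, hp]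
    exact hTe _
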